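/- Let C and C̃ be two N×M cost matrices with |c_{ij} − c̃_{ij}| ≤ δ for all i, j, and let A* and Ã* be optimal feasible assignments for C and C̃ respectively (feasible meaning binary with row/column sums ≤ 1 and total sum min(N,M)). Then the true cost of the suboptimal assignment satisfies ∑ c_{ij} ã*_{ij} ≤ ∑ c_{ij} a*_{ij} + 2·min(N,M)·δ. -/
import Mathlib


def FeasibleAssignment {N M : ℕ} (A : Fin N → Fin M → ℝ) : Prop :=
  (∀ i j, A i j = 0 ∨ A i j = 1) ∧
  (∀ i, ∑ j, A i j ≤ 1) ∧
  (∀ j, ∑ i, A i j ≤ 1) ∧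
  (∑ i, ∑ j, A i j = min N M)

lemma perturb_bound {N M : ℕ} (C Ct : Fin N → Fin M → ℝ) (δ : ℝ)
    (hδ : ∀ i j, |C i j - Ct i j| ≤ δ)
    (A : Fin N → Fin M → ℝ) (hA : FeasibleAssignment A) :
    |∑ i, ∑ j, C i j * A i j - ∑ i, ∑ j, Ct i j * A i j| ≤ (min N M : ℝ) * δ := by
  obtain ⟨h01, _, _, hsum⟩ := hA
  have key : ∑ i, ∑ j, C i j * A i j - ∑ i, ∑ j, Ct i j * A i j
      = ∑ i, ∑ j, (C i j - Ct i j) * A i j := by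
    rw [← Finset.sum_sub_distrib]
    congr 1; ext i
    rw [← Finset.sum_sub_distrib]
    congr 1; ext j; ring
  rw [key]
  calc |∑ i, ∑ j, (C i j - Ct i j) * A i j|
      ≤ ∑ i, ∑ j, |(C i j - Ct i j) * A i j| := by
        refine (Finset.abs_sum_le_sum_abs _ _).trans ?_
        exact Finset.sum_le_sum fun i _ => Finset.abs_sum_le_sum_abs _ _
    _ ≤ ∑ i, ∑ j, δ * A i j := by
        refine Finset.sum_le_sum fun i _ => Finset.sum_le_sum fun j _ => ?_
        rcases h01 i j with h | h <;> simp [h, abs_mul]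
        · exact hδ i j
    _ = (min N M : ℝ) * δ := by
        simp only [← Finset.mul_sum]
        rw [hsum]; push_cast; ring

/-- Stability of the assignment problem under entrywise cost perturbation:
    the true cost of the assignment optimal for the perturbed costs exceeds the
    optimal true cost by at most 2·min(N,M)·δ. -/
theorem assignment_stability (N M : ℕ) (C Ct : Fin N → Fin M → ℝ) (δ : ℝ)
    (hδ : ∀ i j, |C i j - Ct i j| ≤ δ)
    (Astar Atstar : Fin N → Fin M → ℝ)
    (hA : FeasibleAssignment Astar) (hAt : FeasibleAssignment Atstar)
    (hAopt : ∀ A, FeasibleAssignment A →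
      ∑ i, ∑ j, C i j * Astar i j ≤ ∑ i, ∑ j, C i j * A i j)
    (hAtopt : ∀ A, FeasibleAssignment A →
      ∑ i, ∑ j, Ct i j * Atstar i j ≤ ∑ i, ∑ j, Ct i j * A i j) :
    ∑ i, ∑ j, C i j * Atstar i j ≤
      (∑ i, ∑ j, C i j * Astar i j) + 2 * min N M * δ := by
  have h1 := perturb_bound C Ct δ hδ Atstar hAt
  have h2 := perturb_bound C Ct δ hδ Astar hA
  have h3 := hAtopt Astar hA
  have e1 := abs_le.mp h1
  have e2 := abs_le.mp h2
  have : (2 : ℝ) * min N M * δ = (min N M : ℝ) * δ + (min N M : ℝ) * δ := by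
    push_cast; ring
  rw [this]
  linarith [e1.2, e2.1, e2.2, e1.1]
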